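/- The inverse Cauchy transform of the free Poisson distribution MP(p,θ), given by G⁻¹(z) = 1/z + pθ/(1−θz), is a bijection from the open lower half-plane ℂ⁻ onto ℂ⁺ ∪ (θ(√p−1)², θ(√p+1)²) ∪ ℂ⁻. -/

import Mathlib

open Complex Set Real

/-- The product of two elements of the open upper half-plane is never a
positive real number. -/
lemma prod_ne_pos_of_im_pos {u v : ℂ} (hu : 0 < u.im) (hv : 0 < v.im) {c : ℝ}
    (hc : 0 < c) : u * v ≠ (c : ℂ) := by
  intro h
  have hu0 : u ≠ 0 := by
    intro h0; rw [h0] at hu; simp at hu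
  have hveq : v = (c : ℂ) / u := by
    rw [eq_div_iff hu0]
    linear_combination h
  have hvim : v.im = -(c * u.im) / Complex.normSq u := by
    rw [hveq, Complex.div_im]
    simp
    ring
  have hns : 0 < Complex.normSq u := Complex.normSq_pos.mpr hu0
  have : v.im < 0 := by
    rw [hvim]
    apply div_neg_of_neg_of_pos _ hns
    nlinarith
  linarith

/-- A quadratic `u² - Wu + c²` with `W` nonreal and `c > 0` has a root in
the open upper half-plane. -/
lemma exists_quadratic_root_upper (c : ℝ) (hc : 0 < c) (W : ℂ) (hW : W.im ≠ 0) :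
    ∃ u : ℂ, 0 < u.im ∧ u ^ 2 - W * u + ((c ^ 2 : ℝ) : ℂ) = 0 := by
  have hc2 : (0 : ℝ) < c ^ 2 := by positivity
  obtain ⟨δ, hδ⟩ := IsAlgClosed.exists_pow_nat_eq (W ^ 2 - 4 * ((c ^ 2 : ℝ) : ℂ))
    (n := 2) (by norm_num)
  push_cast at hδ
  set u₁ : ℂ := (W + δ) / 2 with hu₁
  set u₂ : ℂ := (W - δ) / 2 with hu₂
  have hq1 : u₁ ^ 2 - W * u₁ + ((c ^ 2 : ℝ) : ℂ) = 0 := by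
    rw [hu₁]; push_cast; linear_combination (1 / 4 : ℂ) * hδ
  have hq2 : u₂ ^ 2 - W * u₂ + ((c ^ 2 : ℝ) : ℂ) = 0 := by
    rw [hu₂]; push_cast; linear_combination (1 / 4 : ℂ) * hδ
  have hprod : u₁ * u₂ = ((c ^ 2 : ℝ) : ℂ) := by
    rw [hu₁, hu₂]; push_cast; linear_combination (-1 / 4 : ℂ) * hδ
  have hnonreal : ∀ u : ℂ, u ^ 2 - W * u + ((c ^ 2 : ℝ) : ℂ) = 0 → u.im ≠ 0 := by
    intro u hq him
    have h1 : (u ^ 2 - W * u + ((c ^ 2 : ℝ) : ℂ)).im = 0 := by rw [hq]; simp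
    have h2 : -(W.im * u.re) = 0 := by
      simp only [Complex.add_im, Complex.sub_im, Complex.mul_im, Complex.ofReal_im,
        pow_two, him] at h1
      simpa using h1
    have hre : u.re = 0 := by
      rcases mul_eq_zero.mp (neg_eq_zero.mp h2) with h | h
      · exact absurd h hW
      · exact h
    have hu0 : u = 0 := by
      apply Complex.ext <;> simp [hre, him]
    rw [hu0] at hq
    simp at hq
    exact absurd hq hc.ne'
  rcases lt_trichotomy u₁.im 0 with h | h | h
  · -- u₁ in lower half-plane; then u₂ must be in the upper half-plane
    refine ⟨u₂, ?_, hq2⟩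
    rcases lt_trichotomy u₂.im 0 with h' | h' | h'
    · exfalso
      have him1 : 0 < (-u₁).im := by simp; linarith
      have him2 : 0 < (-u₂).im := by simp; linarith
      exact prod_ne_pos_of_im_pos him1 him2 hc2 (by rw [neg_mul_neg, hprod])
    · exact absurd h' (hnonreal u₂ hq2)
    · exact h'
  · exact absurd h (hnonreal u₁ hq1)
  · exact ⟨u₁, h, hq1⟩

/-- The shifted Joukowski map `u ↦ u + c²/u + m` is a bijection from the
open upper half-plane onto `ℂ⁺ ∪ (m - 2c, m + 2c) ∪ ℂ⁻`. -/
lemma joukowski_bijOn (c m : ℝ) (hc : 0 < c) :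
    Set.BijOn (fun u : ℂ => u + ((c ^ 2 : ℝ) : ℂ) / u + (m : ℂ))
      {u : ℂ | 0 < u.im}
      ({w : ℂ | 0 < w.im} ∪
        {w : ℂ | w.im = 0 ∧ m - 2 * c < w.re ∧ w.re < m + 2 * c} ∪
        {w : ℂ | w.im < 0}) := by
  have hc2 : (0 : ℝ) < c ^ 2 := by positivity
  refine ⟨?_, ?_, ?_⟩
  · -- MapsTo
    intro u hu
    simp only [mem_setOf_eq] at hu
    have hu0 : u ≠ 0 := by
      intro h0; rw [h0] at hu; simp at hu
    have hns : 0 < Complex.normSq u := Complex.normSq_pos.mpr hu0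
    set w : ℂ := u + ((c ^ 2 : ℝ) : ℂ) / u + (m : ℂ) with hw
    have him : w.im = u.im + (-(c ^ 2 * u.im)) / Complex.normSq u := by
      simp only [hw, Complex.add_im, Complex.div_im, Complex.ofReal_im, Complex.ofReal_re]
      ring
    rcases lt_trichotomy w.im 0 with h | h | h
    · exact Or.inr h
    · -- w is real: show it lies in the interval
      left; right
      have h' : -(c ^ 2 * u.im) = -u.im * Complex.normSq u := by
        rw [him] at h
        field_simp at h
        linarith
      have key : Complex.normSq u = c ^ 2 := by
        have h3 : u.im * (Complex.normSq u - c ^ 2) = 0 := by linear_combination h'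
        rcases mul_eq_zero.mp h3 with h4 | h4
        · exact absurd h4 (ne_of_gt hu)
        · linarith
      have hre : w.re = u.re + c ^ 2 * u.re / Complex.normSq u + m := by
        simp only [hw, Complex.add_re, Complex.div_re, Complex.ofReal_im, Complex.ofReal_re]
        ring
      have hre2 : w.re = 2 * u.re + m := by
        rw [hre, key]
        field_simp
        ring
      have hresq : u.re ^ 2 < c ^ 2 := by
        have hnsq : Complex.normSq u = u.re ^ 2 + u.im ^ 2 := by
          rw [Complex.normSq_apply]; ring
        nlinarith
      refine ⟨h, ?_, ?_⟩ <;> rw [hre2] <;> nlinarith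
    · exact Or.inl (Or.inl h)
  · -- InjOn
    intro u hu v hv h
    simp only [mem_setOf_eq] at hu hv
    have hu0 : u ≠ 0 := by intro h0; rw [h0] at hu; simp at hu
    have hv0 : v ≠ 0 := by intro h0; rw [h0] at hv; simp at hv
    simp only at h
    have key : (u - v) * (u * v - ((c ^ 2 : ℝ) : ℂ)) = 0 := by
      have h2 : u - v + ((c ^ 2 : ℝ) : ℂ) / u - ((c ^ 2 : ℝ) : ℂ) / v = 0 := by
        linear_combination h
      have h3 := congrArg (fun z : ℂ => z * (u * v)) h2
      simp only [zero_mul] at h3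
      field_simp at h3
      push_cast at h3 ⊢
      linear_combination h3
    rcases mul_eq_zero.mp key with h1 | h1
    · exact sub_eq_zero.mp h1
    · exact absurd (sub_eq_zero.mp h1) (prod_ne_pos_of_im_pos hu hv hc2)
  · -- SurjOn
    intro w hw
    have main : ∀ u : ℂ, 0 < u.im → u ^ 2 - (w - (m : ℂ)) * u + ((c ^ 2 : ℝ) : ℂ) = 0 →
        w ∈ (fun u : ℂ => u + ((c ^ 2 : ℝ) : ℂ) / u + (m : ℂ)) '' {u : ℂ | 0 < u.im} := by
      intro u hu hq
      have hu0 : u ≠ 0 := by intro h0; rw [h0] at hu; simp at hu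
      refine ⟨u, hu, ?_⟩
      field_simp
      push_cast at hq ⊢
      linear_combination hq
    rcases hw with (hw | hw) | hw
    · obtain ⟨u, hu, hq⟩ := exists_quadratic_root_upper c hc (w - (m : ℂ))
        (by simp; exact (ne_of_gt hw)) -- (w - m).im = w.im ≠ 0
      exact main u hu hq
    · -- w real in the interval
      simp only [mem_setOf_eq] at hw
      obtain ⟨him, h1, h2⟩ := hw
      set ρ : ℝ := w.re - m with hρ
      have hρsq : ρ ^ 2 < 4 * c ^ 2 := by
        have ha : -(2 * c) < ρ := by rw [hρ]; linarith
        have hb : ρ < 2 * c := by rw [hρ]; linarith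
        nlinarith
      set s : ℝ := Real.sqrt (4 * c ^ 2 - ρ ^ 2) with hs
      have hs2 : s ^ 2 = 4 * c ^ 2 - ρ ^ 2 := Real.sq_sqrt (by linarith)
      have hspos : 0 < s := Real.sqrt_pos.mpr (by linarith)
      set u : ℂ := ((ρ / 2 : ℝ) : ℂ) + ((s / 2 : ℝ) : ℂ) * Complex.I with hu
      have huim : 0 < u.im := by
        rw [hu]; simp; linarith
      apply main u huim
      have hwre : w = ((w.re : ℝ) : ℂ) := by
        apply Complex.ext <;> simp [him]
      rw [hwre, hu]
      have hcast : ((s : ℝ) : ℂ) ^ 2 = 4 * ((c : ℝ) : ℂ) ^ 2 - ((ρ : ℝ) : ℂ) ^ 2 := by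
        exact_mod_cast congrArg (fun x : ℝ => (x : ℂ)) hs2
      have hρc : ((ρ : ℝ) : ℂ) = ((w.re : ℝ) : ℂ) - (m : ℂ) := by
        rw [hρ]; push_cast; ring
      push_cast
      push_cast at hcast hρc
      linear_combination ((s : ℂ) ^ 2 / 4) * Complex.I_sq + (-1 / 4 : ℂ) * hcast
        + (((ρ : ℝ) : ℂ) / 2 + (((s : ℝ) : ℂ) / 2) * Complex.I) * hρc
    · obtain ⟨u, hu, hq⟩ := exists_quadratic_root_upper c hc (w - (m : ℂ))
        (by simp; exact (ne_of_lt hw))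
      exact main u hu hq

/-- `z ↦ 1/z - θ` is a bijection from the lower half-plane to the upper. -/
lemma inv_sub_bijOn (θ : ℝ) :
    Set.BijOn (fun z : ℂ => 1 / z - (θ : ℂ)) {z : ℂ | z.im < 0} {u : ℂ | 0 < u.im} := by
  refine ⟨?_, ?_, ?_⟩
  · intro z hz
    simp only [mem_setOf_eq] at hz ⊢
    have hz0 : z ≠ 0 := by intro h0; rw [h0] at hz; simp at hz
    have : ((1 : ℂ) / z - (θ : ℂ)).im = -z.im / Complex.normSq z := by
      simp [Complex.div_im]
    rw [this]
    exact div_pos (by linarith) (Complex.normSq_pos.mpr hz0)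
  · intro a ha b hb h
    simp only [mem_setOf_eq] at ha hb
    have ha0 : a ≠ 0 := by intro h0; rw [h0] at ha; simp at ha
    have hb0 : b ≠ 0 := by intro h0; rw [h0] at hb; simp at hb
    simp only at h
    have h' : (1 : ℂ) / a = 1 / b := by
      have := sub_left_inj.mp h
      exact this
    field_simp at h'
    exact h'.symm
  · intro u hu
    simp only [mem_setOf_eq] at hu
    have hu0 : u + (θ : ℂ) ≠ 0 := by
      intro h0
      have : (u + (θ : ℂ)).im = 0 := by rw [h0]; simp
      simp at this
      linarith
    refine ⟨(u + (θ : ℂ))⁻¹, ?_, ?_⟩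
    · simp only [mem_setOf_eq, Complex.inv_im]
      apply div_neg_of_neg_of_pos
      · simp; linarith
      · exact Complex.normSq_pos.mpr hu0
    · simp only
      rw [one_div, inv_inv]
      ring

theorem freePoisson_inverse_cauchy_bijOn (p θ : ℝ) (hp : 0 < p) (hθ : 0 < θ) :
    Set.BijOn (fun z : ℂ => 1 / z + (p * θ : ℝ) / (1 - (θ : ℝ) * z))
      {z : ℂ | z.im < 0}
      ({z : ℂ | 0 < z.im} ∪
        {z : ℂ | z.im = 0 ∧ θ * (Real.sqrt p - 1) ^ 2 < z.re ∧
          z.re < θ * (Real.sqrt p + 1) ^ 2} ∪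
        {z : ℂ | z.im < 0}) := by
  have hsq : Real.sqrt p ^ 2 = p := Real.sq_sqrt hp.le
  have hsppos : 0 < Real.sqrt p := Real.sqrt_pos.mpr hp
  have hc : 0 < Real.sqrt p * θ := mul_pos hsppos hθ
  have hcomp := (joukowski_bijOn (Real.sqrt p * θ) ((p + 1) * θ) hc).comp (inv_sub_bijOn θ)
  have e1 : (p + 1) * θ - 2 * (Real.sqrt p * θ) = θ * (Real.sqrt p - 1) ^ 2 := by
    linear_combination (-θ) * hsq
  have e2 : (p + 1) * θ + 2 * (Real.sqrt p * θ) = θ * (Real.sqrt p + 1) ^ 2 := by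
    linear_combination (-θ) * hsq
  rw [e1, e2] at hcomp
  apply hcomp.congr
  intro z hz
  simp only [mem_setOf_eq] at hz
  simp only [Function.comp_apply]
  have hz0 : z ≠ 0 := by intro h0; rw [h0] at hz; simp at hz
  have h1z : (1 : ℂ) - (θ : ℂ) * z ≠ 0 := by
    intro h0
    have : ((1 : ℂ) - (θ : ℂ) * z).im = 0 := by rw [h0]; simp
    simp at this
    rcases this with h | h
    · linarith
    · linarith
  have hu0 : (1 : ℂ) / z - (θ : ℂ) ≠ 0 := by
    have heq : (1 : ℂ) / z - (θ : ℂ) = ((1 : ℂ) - (θ : ℂ) * z) / z := by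
      field_simp
    rw [heq]
    exact div_ne_zero h1z hz0
  have hc2r : ((Real.sqrt p * θ) ^ 2 : ℝ) = p * θ ^ 2 := by
    rw [mul_pow, hsq]
  have h1z' : (1 : ℂ) - z * (θ : ℂ) ≠ 0 := by rwa [mul_comm] at h1z
  rw [show ((((Real.sqrt p * θ) ^ 2 : ℝ)) : ℂ) = ((p * θ ^ 2 : ℝ) : ℂ) by rw [hc2r]]
  push_cast
  field_simp
  ring
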